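/- Let R be an ordered commutative ring and (G,L) an R-network on a connected ∂-graph G with w(e) > 0 for all edges e and d(x) ≥ 0 for all vertices x, where G has infinitely many vertices. If u : V → R is a finitely supported function with Lu ≡ 0 on all of V, then u = 0. -/

import Mathlib

open Finsupp

/-- A graph with boundary (`∂`-graph) together with a generalized Laplacian datum over `R`:
oriented edges with a fixed-point-free reversal involution, local finiteness,
a set of boundary vertices, symmetric edge weights `w` and diagonal perturbation `d`. -/
structure DNetwork (R : Type) [CommRing R] where
  V : Type
  E : Type
  src : E → V
  rev : E → E
  rev_rev : ∀ e, rev (rev e) = e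
  rev_ne : ∀ e, rev e ≠ e
  finE : ∀ x : V, Fintype {e : E // src e = x}
  boundary : Set V
  w : E → R
  w_rev : ∀ e, w (rev e) = w e
  d : V → R

namespace DNetwork

variable {R : Type} [CommRing R] (N : DNetwork R)

/-- The endpoint of an oriented edge. -/
def tgt (e : N.E) : N.V := N.src (N.rev e)

/-- The generalized Laplacian evaluated at the vertex `x`, as a linear functional on
`M`-valued functions: `Lu(x) = d(x) u(x) + ∑_{e : e₊ = x} w(e) (u(x) - u(e₋))`. -/
noncomputable def lapAt {M : Type} [AddCommGroup M] [Module R M] (x : N.V) :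
    (N.V → M) →ₗ[R] M :=
  letI := N.finE x
  N.d x • (LinearMap.proj x : (N.V → M) →ₗ[R] M) +
    ∑ e : {e : N.E // N.src e = x},
      N.w e.1 • ((LinearMap.proj x : (N.V → M) →ₗ[R] M) - LinearMap.proj (N.tgt e.1))

/-- The generalized Laplacian applied to the basis chain at the vertex `x`. -/
noncomputable def lapSingle (x : N.V) : N.V →₀ R :=
  letI := N.finE x
  N.d x • Finsupp.single x 1 +
    ∑ e : {e : N.E // N.src e = x},
      N.w e.1 • (Finsupp.single x 1 - Finsupp.single (N.tgt e.1) 1)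

/-- The generalized Laplacian as a linear endomorphism of the module `RV` of `0`-chains. -/
noncomputable def chainLap : (N.V →₀ R) →ₗ[R] (N.V →₀ R) :=
  Finsupp.lsum R fun x => LinearMap.toSpanSingleton R _ (N.lapSingle x)

/-- The set of interior vertices. -/
def interior : Set N.V := N.boundaryᶜ

/-- The submodule `L(RV°)` of `RV`. -/
noncomputable def lapImage : Submodule R (N.V →₀ R) :=
  Submodule.map N.chainLap (Finsupp.supported R R N.interior)

/-- The fundamental module `Υ(G,L) = RV / L(RV°)`. -/
abbrev Upsilon := (N.V →₀ R) ⧸ N.lapImage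

/-- The submodule of `M`-valued harmonic functions `U(G,L,M)`. -/
noncomputable def harmonic (M : Type) [AddCommGroup M] [Module R M] :
    Submodule R (N.V → M) :=
  ⨅ x ∈ N.interior, LinearMap.ker (N.lapAt (M := M) x)

/-- The module `U₀(G,L,M)` of finitely supported `M`-valued functions `u` with
`u = 0` on the boundary and `Lu ≡ 0` everywhere. -/
noncomputable def U0 (M : Type) [AddCommGroup M] [Module R M] :
    Submodule R (N.V →₀ M) :=
  (⨅ x ∈ N.boundary, LinearMap.ker (Finsupp.lapply (M := M) (R := R) x)) ⊓
    (⨅ x : N.V, LinearMap.ker ((N.lapAt (M := M) x).comp Finsupp.lcoeFun))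

/-- Adjacency via an oriented edge. -/
def Adj (x y : N.V) : Prop := ∃ e : N.E, N.src e = x ∧ N.tgt e = y

/-- Connectivity of the underlying graph. -/
def Connected : Prop := ∀ x y : N.V, Relation.ReflTransGen N.Adj x y

end DNetwork

/-- over an ordered commutative ring, with positive edge weights, nonnegative
diagonal, connected graph with infinitely many vertices, a finitely supported function
with `Lu ≡ 0` on all of `V` vanishes identically. -/
theorem finsupp_lap_zero_eq_zero_of_infinite
    {R : Type} [CommRing R] [LinearOrder R] [IsStrictOrderedRing R] (N : DNetwork R)
    (hw : ∀ e : N.E, 0 < N.w e) (hd : ∀ x : N.V, 0 ≤ N.d x)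
    (hconn : N.Connected) [Infinite N.V]
    (u : N.V →₀ R)
    (hlap : ∀ x : N.V, N.lapAt x ⇑u = 0) :
    u = 0 := by
  classical
  obtain ⟨x0, hx0⟩ := Infinite.exists_notMem_finset u.support
  have hux0 : u x0 = 0 := Finsupp.notMem_support_iff.mp hx0
  -- find a maximum point of u
  obtain ⟨x, hxs, hxmax⟩ :=
    Finset.exists_max_image (insert x0 u.support) (fun y => u y)
      ⟨x0, Finset.mem_insert_self _ _⟩
  have hmax : ∀ y : N.V, u y ≤ u x := by
    intro y
    by_cases hy : y ∈ insert x0 u.support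
    · exact hxmax y hy
    · have : u y = 0 := Finsupp.notMem_support_iff.mp (fun h => hy (Finset.mem_insert_of_mem h))
      rw [this, ← hux0]
      exact hxmax x0 (Finset.mem_insert_self _ _)
  have hnn : 0 ≤ u x := by
    have := hmax x0
    rwa [hux0] at this
  -- any maximum point propagates to neighbors
  have key : ∀ b : N.V, u b = u x → ∀ e : N.E, N.src e = b → u (N.tgt e) = u x := by
    intro b hb e he
    have hl := hlap b
    simp [DNetwork.lapAt] at hl
    letI := N.finE b
    have h1 : 0 ≤ N.d b * u b := mul_nonneg (hd b) (hb ▸ hnn)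
    have h2 : ∀ f : {e : N.E // N.src e = b}, f ∈ Finset.univ →
        0 ≤ N.w f.1 * (u b - u (N.tgt f.1)) := by
      intro f _
      exact mul_nonneg (hw f.1).le (by linarith [hmax (N.tgt f.1), hb.ge])
    have hsum : 0 ≤ ∑ f : {e : N.E // N.src e = b}, N.w f.1 * (u b - u (N.tgt f.1)) :=
      Finset.sum_nonneg h2
    have hsz : ∑ f : {e : N.E // N.src e = b}, N.w f.1 * (u b - u (N.tgt f.1)) = 0 := by
      linarith
    have := (Finset.sum_eq_zero_iff_of_nonneg h2).mp hsz ⟨e, he⟩ (Finset.mem_univ _)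
    have hne : N.w e ≠ 0 := (hw e).ne'
    have : u b - u (N.tgt e) = 0 := by
      rcases mul_eq_zero.mp this with h | h
      · exact absurd h hne
      · exact h
    linarith [hb.symm.le, hb.le, this]
  -- propagate along connectivity
  have hall : ∀ y : N.V, u y = u x := by
    intro y
    have h := hconn x y
    induction h with
    | refl => rfl
    | tail _ hadj ih =>
        obtain ⟨e, he, hte⟩ := hadj
        rw [← hte]
        exact key _ ih e he
  have hx0' : u x = 0 := by rw [← hall x0, hux0]
  ext y
  rw [hall y, hx0']
  rfl
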